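/- Let N be a bounded normal operator in a Krein space. The set σ₊₊(N) of spectral points of two-sided positive type is open in σ(N): if λ ∈ σ₊₊(N) there is ε > 0 such that every μ ∈ σ(N) with |μ - λ| < ε belongs to σ₊₊(N). -/

import Mathlib

open Filter Topology ContinuousLinearMap
noncomputable section
variable {H : Type*} [NormedAddCommGroup H] [InnerProductSpace ℂ H] [CompleteSpace H]

def kadj (J T : H →L[ℂ] H) : H →L[ℂ] H := J ∘L (ContinuousLinearMap.adjoint T) ∘L J

lemma JJ_apply (J : H →L[ℂ] H) (hJ2 : J ∘L J = 1) (x : H) : J (J x) = x := by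
  have := ContinuousLinearMap.ext_iff.mp hJ2 x
  simpa using this

lemma J_inner (J : H →L[ℂ] H) (hJ : ContinuousLinearMap.adjoint J = J) (hJ2 : J ∘L J = 1)
    (x y : H) : (inner ℂ (J x) (J y) : ℂ) = inner ℂ x y := by
  rw [← hJ, adjoint_inner_left, hJ, JJ_apply J hJ2]

lemma J_norm (J : H →L[ℂ] H) (hJ : ContinuousLinearMap.adjoint J = J) (hJ2 : J ∘L J = 1)
    (x : H) : ‖J x‖ = ‖x‖ := by
  have h := J_inner J hJ hJ2 x x
  rw [inner_self_eq_norm_sq_to_K, inner_self_eq_norm_sq_to_K] at h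
  have h2 : (‖J x‖:ℝ)^2 = ‖x‖^2 := by exact_mod_cast h
  nlinarith [norm_nonneg (J x), norm_nonneg x]

lemma B1 (J N : H →L[ℂ] H) (hJ : ContinuousLinearMap.adjoint J = J) (hJ2 : J ∘L J = 1)
    (x y : H) : (inner ℂ (J (N x)) y : ℂ) = inner ℂ (J x) (kadj J N y) := by
  simp only [kadj, ContinuousLinearMap.comp_apply]
  rw [J_inner J hJ hJ2, adjoint_inner_right, ← hJ, adjoint_inner_left, hJ]

lemma kadj_kadj (J N : H →L[ℂ] H) (hJ : ContinuousLinearMap.adjoint J = J) (hJ2 : J ∘L J = 1) :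
    kadj J (kadj J N) = N := by
  simp only [kadj, adjoint_comp, adjoint_adjoint, hJ]
  ext x
  simp [JJ_apply J hJ2]

lemma B2 (J N : H →L[ℂ] H) (hJ : ContinuousLinearMap.adjoint J = J) (hJ2 : J ∘L J = 1)
    (x y : H) : (inner ℂ (J (kadj J N x)) y : ℂ) = inner ℂ (J x) (N y) := by
  have := B1 J (kadj J N) hJ hJ2 x y
  rwa [kadj_kadj J N hJ hJ2] at this

lemma comm_apply (J N : H →L[ℂ] H) (hN : N ∘L kadj J N = kadj J N ∘L N) (x : H) :
    N (kadj J N x) = kadj J N (N x) :=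
  ContinuousLinearMap.ext_iff.mp hN x

lemma keyId (J N : H →L[ℂ] H) (hJ : ContinuousLinearMap.adjoint J = J) (hJ2 : J ∘L J = 1)
    (hN : N ∘L kadj J N = kadj J N ∘L N) (μ : ℂ) (x : H) :
    (inner ℂ (J (kadj J N x - (starRingEnd ℂ) μ • x)) (kadj J N x - (starRingEnd ℂ) μ • x) : ℂ)
      = inner ℂ (J (N x - μ • x)) (N x - μ • x) := by
  simp only [map_sub, map_smul, inner_sub_left, inner_sub_right, inner_smul_left,
    inner_smul_right, RingHom.id_apply, Complex.conj_conj]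
  rw [B2 J N hJ hJ2 x (kadj J N x), B2 J N hJ hJ2 x x, B1 J N hJ hJ2 x (N x),
    comm_apply J N hN x, B1 J N hJ hJ2 x x]
  ring

def ApproxEig (T : H →L[ℂ] H) (l : ℂ) (x : ℕ → H) : Prop :=
  (∀ n, ‖x n‖ = 1) ∧ Tendsto (fun n => T (x n) - l • x n) atTop (nhds 0)

def approxSpec (T : H →L[ℂ] H) : Set ℂ := {l | ∃ x : ℕ → H, ApproxEig T l x}

def posType (J T : H →L[ℂ] H) : Set ℂ :=
  {l | l ∈ approxSpec T ∧ ∀ x : ℕ → H, ApproxEig T l x →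
      0 < Filter.liminf (fun n => (inner ℂ (J (x n)) (x n) : ℂ).re) Filter.atTop}

lemma bform_bound (J : H →L[ℂ] H) (x : H) :
    |(inner ℂ (J x) x : ℂ).re| ≤ ‖J‖ * ‖x‖^2 := by
  calc |(inner ℂ (J x) x : ℂ).re| ≤ ‖(inner ℂ (J x) x : ℂ)‖ := Complex.abs_re_le_norm _
    _ ≤ ‖J x‖ * ‖x‖ := norm_inner_le_norm _ _
    _ ≤ (‖J‖ * ‖x‖) * ‖x‖ := by
        have := J.le_opNorm x
        have h0 := norm_nonneg x
        nlinarith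
    _ = ‖J‖ * ‖x‖^2 := by ring

lemma quant (J T : H →L[ℂ] H) (l : ℂ) (hl : l ∈ posType J T) :
    ∃ ε > 0, ∃ δ > 0, ∀ x : H, ‖T x - l • x‖ ≤ ε * ‖x‖ →
      δ * ‖x‖^2 ≤ (inner ℂ (J x) x : ℂ).re := by
  have key : ∃ ε > 0, ∃ δ > 0, ∀ x : H, ‖x‖ = 1 → ‖T x - l • x‖ ≤ ε →
      δ ≤ (inner ℂ (J x) x : ℂ).re := by
    by_contra hcon
    push_neg at hcon
    have hex : ∀ n : ℕ, ∃ x : H, ‖x‖ = 1 ∧ ‖T x - l • x‖ ≤ 1/(n+1) ∧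
        (inner ℂ (J x) x : ℂ).re < 1/(n+1) := by
      intro n
      obtain ⟨x, hx1, hx2, hx3⟩ := hcon (1/(n+1)) (by positivity) (1/(n+1)) (by positivity)
      exact ⟨x, hx1, hx2, hx3⟩
    choose x h1 h2 h3 using hex
    have hae : ApproxEig T l x := by
      refine ⟨h1, squeeze_zero_norm h2 ?_⟩
      exact tendsto_one_div_add_atTop_nhds_zero_nat
    have hpos := hl.2 x hae
    set f := fun n => (inner ℂ (J (x n)) (x n) : ℂ).re with hf
    set L := liminf f atTop with hL
    have hbdd : IsBoundedUnder (· ≥ ·) atTop f := by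
      refine isBoundedUnder_of ⟨-‖J‖, fun n => ?_⟩
      have hb := bform_bound J (x n)
      rw [h1 n] at hb
      simp only [one_pow, mul_one] at hb
      have := abs_le.mp hb
      simp only [ge_iff_le, hf]
      linarith [this.1]
    have hev1 : ∀ᶠ n in atTop, L/2 < f n :=
      eventually_lt_of_lt_liminf (by linarith) hbdd
    have hev2 : ∀ᶠ n : ℕ in atTop, 1/((n:ℝ)+1) < L/2 :=
      tendsto_one_div_add_atTop_nhds_zero_nat.eventually_lt_const (by linarith)
    obtain ⟨n, hn1, hn2⟩ := (hev1.and hev2).exists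
    exact absurd (h3 n) (by simp only [hf] at hn1; linarith)
  obtain ⟨ε, hε, δ, hδ, hq⟩ := key
  refine ⟨ε, hε, δ, hδ, fun x hx => ?_⟩
  rcases eq_or_ne x 0 with rfl | hx0
  · simp
  · have hnx : 0 < ‖x‖ := norm_pos_iff.mpr hx0
    set a : ℂ := ((‖x‖ : ℂ))⁻¹ with ha
    set u := a • x with hu
    have hna : ‖a‖ = ‖x‖⁻¹ := by
      rw [ha, norm_inv, Complex.norm_real, Real.norm_eq_abs, abs_of_pos hnx]
    have hu1 : ‖u‖ = 1 := by
      rw [hu, norm_smul, hna, inv_mul_cancel₀ hnx.ne']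
    have hTu : T u - l • u = a • (T x - l • x) := by
      rw [hu, map_smul, smul_sub, smul_comm]
    have hTu' : ‖T u - l • u‖ ≤ ε := by
      rw [hTu, norm_smul, hna, inv_mul_le_iff₀ hnx]
      linarith [hx]
    have hle := hq u hu1 hTu'
    have hinner : (inner ℂ (J u) u : ℂ) = (((‖x‖^2)⁻¹ : ℝ) : ℂ) * inner ℂ (J x) x := by
      rw [hu, map_smul, inner_smul_left, inner_smul_right, ha]
      push_cast
      rw [map_inv₀, Complex.conj_ofReal]
      ring
    have hre : (inner ℂ (J u) u : ℂ).re = (‖x‖^2)⁻¹ * (inner ℂ (J x) x : ℂ).re := by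
      rw [hinner, Complex.re_ofReal_mul]
    rw [hre] at hle
    have h2 : δ * ‖x‖^2 ≤ ((‖x‖^2)⁻¹ * (inner ℂ (J x) x : ℂ).re) * ‖x‖^2 :=
      mul_le_mul_of_nonneg_right hle (sq_nonneg _)
    calc δ * ‖x‖^2 ≤ ((‖x‖^2)⁻¹ * (inner ℂ (J x) x : ℂ).re) * ‖x‖^2 := h2
      _ = (inner ℂ (J x) x : ℂ).re := by
          field_simp

lemma swap_aux (N M : H →L[ℂ] H) (μ ν : ℂ) (w : H) (hcomm : N (M w) = M (N w)) :
    N (M w - ν • w) - μ • (M w - ν • w) = M (N w - μ • w) - ν • (N w - μ • w) := by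
  simp only [map_sub, map_smul, smul_sub, hcomm]
  module

lemma transfer (J N : H →L[ℂ] H) (hJ : ContinuousLinearMap.adjoint J = J) (hJ2 : J ∘L J = 1)
    (hN : N ∘L kadj J N = kadj J N ∘L N) {l μ : ℂ} {ε δ : ℝ} (hε : 0 < ε) (hδ : 0 < δ)
    (hquant : ∀ v : H, ‖N v - l • v‖ ≤ ε * ‖v‖ → δ * ‖v‖^2 ≤ (inner ℂ (J v) v : ℂ).re)
    (hμ : ‖μ - l‖ ≤ ε/2) {x : ℕ → H} (hx : ApproxEig N μ x) :
    Tendsto (fun n => kadj J N (x n) - (starRingEnd ℂ) μ • x n) atTop (nhds 0) := by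
  obtain ⟨hx1, hx2⟩ := hx
  rw [NormedAddCommGroup.tendsto_nhds_zero] at hx2 ⊢
  intro c hc
  set C := ‖kadj J N‖ + ‖μ‖ + 1 with hC
  have hC0 : 0 < C := by positivity
  set r := min (c*ε/(2*C)) (Real.sqrt (δ*c^2/(‖J‖+1))) with hr
  have hr0 : 0 < r := lt_min (by positivity) (Real.sqrt_pos.mpr (by positivity))
  filter_upwards [hx2 r hr0] with n hn
  by_contra hyc
  push_neg at hyc
  obtain ⟨y, hy⟩ : ∃ y, kadj J N (x n) - (starRingEnd ℂ) μ • x n = y := ⟨_, rfl⟩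
  obtain ⟨v, hv⟩ : ∃ v, N (x n) - μ • x n = v := ⟨_, rfl⟩
  rw [hy] at hyc
  rw [hv] at hn
  have hswap : N y - μ • y = kadj J N v - (starRingEnd ℂ) μ • v := by
    rw [← hy, ← hv]
    exact swap_aux N (kadj J N) μ ((starRingEnd ℂ) μ) (x n) (comm_apply J N hN (x n))
  have hNv : ‖N y - μ • y‖ ≤ C * ‖v‖ := by
    rw [hswap]
    calc ‖kadj J N v - (starRingEnd ℂ) μ • v‖ ≤ ‖kadj J N v‖ + ‖(starRingEnd ℂ) μ • v‖ :=
          norm_sub_le _ _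
      _ ≤ ‖kadj J N‖ * ‖v‖ + ‖μ‖ * ‖v‖ := by
          rw [norm_smul, RCLike.norm_conj]
          exact add_le_add ((kadj J N).le_opNorm v) le_rfl
      _ ≤ C * ‖v‖ := by rw [hC]; nlinarith [norm_nonneg v]
  have hvr : ‖v‖ ≤ r := le_of_lt hn
  have hrC : C * r ≤ c * ε / 2 := by
    have h1 : r ≤ c*ε/(2*C) := min_le_left _ _
    calc C * r ≤ C * (c*ε/(2*C)) := by nlinarith
      _ = c * ε / 2 := by field_simp
  have key1 : ‖N y - l • y‖ ≤ ε * ‖y‖ := by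
    have hdec : N y - l • y = (N y - μ • y) + (μ - l) • y := by module
    calc ‖N y - l • y‖ ≤ ‖N y - μ • y‖ + ‖(μ - l) • y‖ := by rw [hdec]; exact norm_add_le _ _
      _ ≤ C * ‖v‖ + (ε/2) * ‖y‖ := by
          rw [norm_smul]
          exact add_le_add hNv (mul_le_mul_of_nonneg_right hμ (norm_nonneg _))
      _ ≤ c * ε / 2 + (ε/2) * ‖y‖ := by nlinarith [norm_nonneg v]
      _ ≤ ε * ‖y‖ := by nlinarith
  have key2 : δ * ‖y‖^2 ≤ (inner ℂ (J y) y : ℂ).re := hquant y key1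
  have key3 : (inner ℂ (J y) y : ℂ) = inner ℂ (J v) v := by
    rw [← hy, ← hv]
    exact keyId J N hJ hJ2 hN μ (x n)
  have key4 : (inner ℂ (J v) v : ℂ).re ≤ ‖J‖ * ‖v‖^2 :=
    le_trans (le_abs_self _) (bform_bound J v)
  have h5 : ‖v‖^2 ≤ δ*c^2/(‖J‖+1) := by
    have h1 : r ≤ Real.sqrt (δ*c^2/(‖J‖+1)) := min_le_right _ _
    have h2 : Real.sqrt (δ*c^2/(‖J‖+1))^2 = δ*c^2/(‖J‖+1) :=
      Real.sq_sqrt (by positivity)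
    nlinarith [norm_nonneg v, Real.sqrt_nonneg (δ*c^2/(‖J‖+1))]
  have h6 : ‖J‖ * (δ*c^2/(‖J‖+1)) < δ * c^2 := by
    have hlt : ‖J‖ < ‖J‖+1 := by linarith [norm_nonneg J]
    have h61 := mul_lt_mul_of_pos_right hlt (show 0 < δ*c^2/(‖J‖+1) by positivity)
    have h62 : (‖J‖+1) * (δ*c^2/(‖J‖+1)) = δ*c^2 := by
      field_simp
    linarith
  have h7 : δ * c^2 ≤ δ * ‖y‖^2 :=
    mul_le_mul_of_nonneg_left (pow_le_pow_left₀ hc.le hyc 2) hδ.le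
  have h8 : ‖J‖ * ‖v‖^2 ≤ ‖J‖ * (δ*c^2/(‖J‖+1)) :=
    mul_le_mul_of_nonneg_left h5 (norm_nonneg J)
  rw [key3] at key2
  linarith

lemma eigen_case (J N : H →L[ℂ] H) (hJ : ContinuousLinearMap.adjoint J = J) (hJ2 : J ∘L J = 1)
    (hN : N ∘L kadj J N = kadj J N ∘L N) {l μ : ℂ} {ε δ : ℝ} (hε : 0 < ε) (hδ : 0 < δ)
    (hquant : ∀ v : H, ‖kadj J N v - (starRingEnd ℂ) l • v‖ ≤ ε * ‖v‖ →
      δ * ‖v‖^2 ≤ (inner ℂ (J v) v : ℂ).re)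
    (hμ : ‖μ - l‖ ≤ ε) {w : H} (hw : kadj J N w = (starRingEnd ℂ) μ • w) :
    N w = μ • w := by
  obtain ⟨z, hz⟩ : ∃ z, N w - μ • w = z := ⟨_, rfl⟩
  have h0 : (inner ℂ (J z) z : ℂ) = 0 := by
    rw [← hz, ← keyId J N hJ hJ2 hN μ w, hw]
    simp
  have hze : kadj J N z = (starRingEnd ℂ) μ • z := by
    rw [← hz]
    rw [map_sub, map_smul, ← comm_apply J N hN w, hw]
    simp only [map_smul]
    module
  have hnz : ‖kadj J N z - (starRingEnd ℂ) l • z‖ ≤ ε * ‖z‖ := by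
    rw [hze]
    have : (starRingEnd ℂ) μ • z - (starRingEnd ℂ) l • z
        = ((starRingEnd ℂ) μ - (starRingEnd ℂ) l) • z := by module
    rw [this, norm_smul, ← map_sub, RCLike.norm_conj]
    exact mul_le_mul_of_nonneg_right hμ (norm_nonneg _)
  have hq := hquant z hnz
  rw [h0] at hq
  simp only [Complex.zero_re] at hq
  have hz0 : z = 0 := by
    by_contra hne
    have h1 : 0 < ‖z‖ := norm_pos_iff.mpr hne
    nlinarith [mul_pos hδ (pow_pos h1 2)]
  rw [← sub_eq_zero, hz, hz0]

lemma approx_to_pos (J T : H →L[ℂ] H) {l μ : ℂ} {ε δ : ℝ} (hε : 0 < ε) (hδ : 0 < δ)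
    (hquant : ∀ v : H, ‖T v - l • v‖ ≤ ε * ‖v‖ → δ * ‖v‖^2 ≤ (inner ℂ (J v) v : ℂ).re)
    (hμ : ‖μ - l‖ ≤ ε/2) {x : ℕ → H} (hx : ApproxEig T μ x) :
    0 < Filter.liminf (fun n => (inner ℂ (J (x n)) (x n) : ℂ).re) Filter.atTop := by
  obtain ⟨hx1, hx2⟩ := hx
  rw [NormedAddCommGroup.tendsto_nhds_zero] at hx2
  have hev : ∀ᶠ n in atTop, δ ≤ (inner ℂ (J (x n)) (x n) : ℂ).re := by
    filter_upwards [hx2 (ε/2) (by positivity)] with n hn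
    have hsplit : T (x n) - l • x n = (T (x n) - μ • x n) + (μ - l) • x n := by module
    have hb : ‖T (x n) - l • x n‖ ≤ ε * ‖x n‖ := by
      rw [hsplit, hx1 n]
      calc ‖(T (x n) - μ • x n) + (μ - l) • x n‖
          ≤ ‖T (x n) - μ • x n‖ + ‖(μ - l) • x n‖ := norm_add_le _ _
        _ ≤ ε/2 + ε/2 := by
            rw [norm_smul, hx1 n, mul_one]
            exact add_le_add hn.le hμ
        _ = ε * 1 := by ring
    have := hquant (x n) hb
    rwa [hx1 n, one_pow, mul_one] at this
  have hcb : IsCoboundedUnder (· ≥ ·) atTop (fun n => (inner ℂ (J (x n)) (x n) : ℂ).re) := by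
    apply isCoboundedUnder_ge_of_eventually_le atTop (x := ‖J‖)
    filter_upwards with n
    have hb := bform_bound J (x n)
    rw [hx1 n] at hb
    simp only [one_pow, mul_one] at hb
    linarith [abs_le.mp hb |>.2]
  have := le_liminf_of_le hcb hev
  linarith

lemma eigvec_of_bdd_below (N : H →L[ℂ] H) {μ : ℂ} (hspec : μ ∈ spectrum ℂ N)
    {c : ℝ} (hc : 0 < c) (hlow : ∀ v : H, c * ‖v‖ ≤ ‖N v - μ • v‖) :
    ∃ v : H, v ≠ 0 ∧ ContinuousLinearMap.adjoint N v = (starRingEnd ℂ) μ • v := by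
  set S : H →L[ℂ] H := N - μ • 1 with hS
  have hSapp : ∀ v, S v = N v - μ • v := fun v => by
    simp [hS]
  have hanti : AntilipschitzWith (c⁻¹).toNNReal S := by
    apply S.antilipschitz_of_bound
    intro x
    rw [Real.coe_toNNReal _ (inv_nonneg.mpr hc.le), hSapp, inv_mul_eq_div, le_div_iff₀ hc]
    linarith [hlow x]
  have hclosed : IsClosed (Set.range S) := hanti.isClosed_range S.uniformContinuous
  have hnotsurj : ¬Function.Surjective S := by
    intro hsurj
    have hunit : IsUnit S := ContinuousLinearMap.isUnit_iff_bijective.mpr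
      ⟨hanti.injective, hsurj⟩
    apply spectrum.mem_iff.mp hspec
    rw [Algebra.algebraMap_eq_smul_one, show (μ • (1:H →L[ℂ] H) - N) = -(N - μ • 1) by abel]
    exact hunit.neg
  set K : Submodule ℂ H := LinearMap.range (S : H →ₗ[ℂ] H) with hK
  have hKclosed : IsClosed (K : Set H) := by
    rw [hK]
    have : ((LinearMap.range (S : H →ₗ[ℂ] H) : Submodule ℂ H) : Set H) = Set.range S := by
      ext u; simp [LinearMap.mem_range]
    rw [this]
    exact hclosed
  haveI : CompleteSpace K := hKclosed.completeSpace_coe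
  have hKne : K ≠ ⊤ := by
    intro h
    exact hnotsurj (LinearMap.range_eq_top.mp h)
  have hKorth : Kᗮ ≠ ⊥ := fun h => hKne (Submodule.orthogonal_eq_bot_iff.mp h)
  obtain ⟨v, hvK, hv0⟩ := Submodule.exists_mem_ne_zero_of_ne_bot hKorth
  refine ⟨v, hv0, ?_⟩
  have horth : ∀ u : H, (inner ℂ (S u) v : ℂ) = 0 := fun u =>
    (Submodule.mem_orthogonal K v).mp hvK (S u) ⟨u, rfl⟩
  have hzero : ∀ u : H, (inner ℂ u (ContinuousLinearMap.adjoint N v - (starRingEnd ℂ) μ • v) : ℂ)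
      = 0 := by
    intro u
    have h1 := horth u
    rw [hSapp, inner_sub_left, inner_smul_left] at h1
    rw [inner_sub_right, inner_smul_right, adjoint_inner_right]
    linear_combination h1
  apply sub_eq_zero.mp
  apply ext_inner_left ℂ
  intro u
  rw [hzero u, inner_zero_right]

lemma norm_inv_smul {v : H} (hv : v ≠ 0) : ‖((‖v‖:ℂ))⁻¹ • v‖ = 1 := by
  have hnv : 0 < ‖v‖ := norm_pos_iff.mpr hv
  rw [norm_smul, norm_inv, Complex.norm_real, Real.norm_eq_abs, abs_of_pos hnv,
    inv_mul_cancel₀ hnv.ne']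

lemma op_inv_smul (T : H →L[ℂ] H) (μ : ℂ) (v : H) :
    T (((‖v‖:ℂ))⁻¹ • v) - μ • (((‖v‖:ℂ))⁻¹ • v) = ((‖v‖:ℂ))⁻¹ • (T v - μ • v) := by
  rw [map_smul, smul_sub, smul_comm]

theorem twoSidedPosType_isOpen_in_spectrum (J N : H →L[ℂ] H)
    (hJ : ContinuousLinearMap.adjoint J = J) (hJ2 : J ∘L J = 1)
    (hN : N ∘L kadj J N = kadj J N ∘L N)
    (l : ℂ) (hl : l ∈ posType J N) (hl' : (starRingEnd ℂ) l ∈ posType J (kadj J N)) :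
    ∃ ε > 0, ∀ μ ∈ spectrum ℂ N, ‖μ - l‖ < ε →
      μ ∈ posType J N ∧ (starRingEnd ℂ) μ ∈ posType J (kadj J N) := by
  obtain ⟨ε₁, hε₁, δ₁, hδ₁, hq1⟩ := quant J N l hl
  obtain ⟨ε₂, hε₂, δ₂, hδ₂, hq2⟩ := quant J (kadj J N) ((starRingEnd ℂ) l) hl'
  refine ⟨min ε₁ ε₂ / 2, by positivity, fun μ hμspec hμnear => ?_⟩
  have hμ1 : ‖μ - l‖ ≤ ε₁/2 := by
    have := min_le_left ε₁ ε₂; linarith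
  have hμ2 : ‖μ - l‖ ≤ ε₂/2 := by
    have := min_le_right ε₁ ε₂; linarith
  have hμc : ‖(starRingEnd ℂ) μ - (starRingEnd ℂ) l‖ = ‖μ - l‖ := by
    rw [← map_sub, RCLike.norm_conj]
  have posN : ∀ x : ℕ → H, ApproxEig N μ x →
      0 < Filter.liminf (fun n => (inner ℂ (J (x n)) (x n) : ℂ).re) Filter.atTop :=
    fun x hx => approx_to_pos J N hε₁ hδ₁ hq1 hμ1 hx
  have posNp : ∀ x : ℕ → H, ApproxEig (kadj J N) ((starRingEnd ℂ) μ) x →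
      0 < Filter.liminf (fun n => (inner ℂ (J (x n)) (x n) : ℂ).re) Filter.atTop :=
    fun x hx => approx_to_pos J (kadj J N) hε₂ hδ₂ hq2 (by rw [hμc]; exact hμ2) hx
  by_cases hbb : ∃ c > 0, ∀ v : H, c * ‖v‖ ≤ ‖N v - μ • v‖
  · obtain ⟨c, hc, hlow⟩ := hbb
    obtain ⟨v, hv0, hva⟩ := eigvec_of_bdd_below N hμspec hc hlow
    have hw0 : J v ≠ 0 := fun h => hv0 (by rw [← JJ_apply J hJ2 v, h, map_zero])
    have hwe : kadj J N (J v) = (starRingEnd ℂ) μ • (J v) := by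
      show J (ContinuousLinearMap.adjoint N (J (J v))) = _
      rw [JJ_apply J hJ2, hva, map_smul]
    have hNw : N (J v) = μ • (J v) :=
      eigen_case J N hJ hJ2 hN hε₂ hδ₂ hq2 (by linarith) hwe
    set u : ℕ → H := fun _ => ((‖J v‖:ℂ))⁻¹ • (J v) with hu
    have hu1 : ∀ n, ‖u n‖ = 1 := fun n => norm_inv_smul hw0
    have haeN : ApproxEig N μ u := by
      refine ⟨hu1, ?_⟩
      have h0 : ∀ n, N (u n) - μ • u n = 0 := fun n => by
        rw [hu, op_inv_smul, hNw, sub_self, smul_zero]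
      rw [show (fun n => N (u n) - μ • u n) = fun _ => (0:H) from funext h0]
      exact tendsto_const_nhds
    have haeNp : ApproxEig (kadj J N) ((starRingEnd ℂ) μ) u := by
      refine ⟨hu1, ?_⟩
      have h0 : ∀ n, kadj J N (u n) - (starRingEnd ℂ) μ • u n = 0 := fun n => by
        rw [hu, op_inv_smul, hwe, sub_self, smul_zero]
      rw [show (fun n => kadj J N (u n) - (starRingEnd ℂ) μ • u n) = fun _ => (0:H) from
        funext h0]
      exact tendsto_const_nhds
    exact ⟨⟨⟨u, haeN⟩, posN⟩, ⟨⟨u, haeNp⟩, posNp⟩⟩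
  · push_neg at hbb
    have hex : ∀ n : ℕ, ∃ u : H, ‖u‖ = 1 ∧ ‖N u - μ • u‖ ≤ 1/(n+1) := by
      intro n
      obtain ⟨v, hv⟩ := hbb (1/(n+1)) (by positivity)
      have hv0 : v ≠ 0 := by
        intro h
        rw [h] at hv
        simp at hv
      have hnv : 0 < ‖v‖ := norm_pos_iff.mpr hv0
      refine ⟨((‖v‖:ℂ))⁻¹ • v, norm_inv_smul hv0, ?_⟩
      rw [op_inv_smul, norm_smul, norm_inv, Complex.norm_real, Real.norm_eq_abs,
        abs_of_pos hnv, inv_mul_le_iff₀ hnv]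
      calc ‖N v - μ • v‖ ≤ (1/(n+1)) * ‖v‖ := hv.le
        _ = ‖v‖ * (1/(n+1)) := by ring
    choose u h1 h2 using hex
    have haeN : ApproxEig N μ u :=
      ⟨h1, squeeze_zero_norm h2 tendsto_one_div_add_atTop_nhds_zero_nat⟩
    have htr := transfer J N hJ hJ2 hN hε₁ hδ₁ hq1 hμ1 haeN
    have haeNp : ApproxEig (kadj J N) ((starRingEnd ℂ) μ) u := ⟨h1, htr⟩
    exact ⟨⟨⟨u, haeN⟩, posN⟩, ⟨⟨u, haeNp⟩, posNp⟩⟩
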